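/- For π = 1/2 and any fixed (β₁ᵍ, β₀ᵍ) ∈ ℝ², the Bayes-optimal decision boundary c_bayes = β₀ᵍ + β₁ᵍ/2 is a critical point of the asymptotic relative bias function viewed as a function of the threshold c: ∂b/∂c evaluated at c = c_bayes equals 0. -/

import Mathlib

open MeasureTheory ProbabilityTheory Filter

/-- Standard normal CDF. -/
noncomputable def Phi (x : ℝ) : ℝ := ((gaussianReal 0 1) (Set.Iic x)).toReal

/-- Attenuation function `γ(β₁ᵍ, π, c, β₀ᵍ) = π(ω − E)/(E(1 − E))` with
`E = ζ(1−π) + ωπ`, `ω = Φ(β₁ᵍ + β₀ᵍ − c)`, `ζ = Φ(β₀ᵍ − c)`. -/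
noncomputable def gammaFn (b1 p c b0 : ℝ) : ℝ :=
  p * (Phi (b1 + b0 - c) - (Phi (b0 - c) * (1 - p) + Phi (b1 + b0 - c) * p)) /
    ((Phi (b0 - c) * (1 - p) + Phi (b1 + b0 - c) * p) *
      (1 - (Phi (b0 - c) * (1 - p) + Phi (b1 + b0 - c) * p)))

noncomputable def phi (x : ℝ) : ℝ := gaussianPDFReal 0 1 x

lemma continuous_phi : Continuous phi := by
  unfold phi
  rw [gaussianPDFReal_def]
  fun_prop

lemma phi_neg (x : ℝ) : phi (-x) = phi x := by
  simp [phi, gaussianPDFReal, neg_sq]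

lemma Phi_eq (x : ℝ) : Phi x = ∫ t in Set.Iic x, phi t := by
  rw [Phi, gaussianReal_apply_eq_integral 0 one_ne_zero,
    ENNReal.toReal_ofReal (integral_nonneg fun t => gaussianPDFReal_nonneg 0 1 t)]
  rfl

lemma hasDerivAt_Phi (x : ℝ) : HasDerivAt Phi (phi x) x := by
  have h0 : ∀ y : ℝ, Phi y = Phi 0 + ∫ t in (0:ℝ)..y, phi t := by
    intro y
    rw [Phi_eq, Phi_eq]
    unfold phi
    rw [← intervalIntegral.integral_Iic_sub_Iic
      (((integrable_gaussianPDFReal 0 1).integrableOn : IntegrableOn (gaussianPDFReal 0 1) _ _))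
      (((integrable_gaussianPDFReal 0 1).integrableOn : IntegrableOn (gaussianPDFReal 0 1) _ _))]
    ring
  have := (intervalIntegral.integral_hasDerivAt_right
    ((continuous_phi.intervalIntegrable 0 x))
    (continuous_phi.stronglyMeasurable.stronglyMeasurableAtFilter)
    continuous_phi.continuousAt).const_add (Phi 0)
  exact this.congr_of_eventuallyEq (Filter.Eventually.of_forall fun y => (h0 y))

lemma Phi_add_Phi_neg (x : ℝ) : Phi x + Phi (-x) = 1 := by
  have h1 : Phi (-x) = ∫ t in Set.Ioi x, phi t := by
    rw [Phi_eq, ← integral_comp_neg_Ioi x phi]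
    exact setIntegral_congr_fun measurableSet_Ioi fun t _ => phi_neg t
  rw [Phi_eq, h1]
  unfold phi
  rw [intervalIntegral.integral_Iic_add_Ioi
    ((integrable_gaussianPDFReal 0 1).integrableOn : IntegrableOn (gaussianPDFReal 0 1) _ _)
    ((integrable_gaussianPDFReal 0 1).integrableOn : IntegrableOn (gaussianPDFReal 0 1) _ _)]
  exact integral_gaussianPDFReal_eq_one 0 one_ne_zero

/-- For π = 1/2, the Bayes-optimal decision boundary c_bayes = β₀ᵍ + β₁ᵍ/2 is a
critical point of the asymptotic relative bias b = 1 − γ viewed as a function of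
the threshold c. -/
theorem stmt_3 (b1 b0 : ℝ) :
    HasDerivAt (fun c => 1 - gammaFn b1 (1/2) c b0) 0 (b0 + b1 / 2) := by
  set c0 : ℝ := b0 + b1 / 2 with hc0
  have key : Phi (b0 - c0) = 1 - Phi (b1 + b0 - c0) := by
    have h1 := Phi_add_Phi_neg (b1 + b0 - c0)
    have h2 : b0 - c0 = -(b1 + b0 - c0) := by rw [hc0]; ring
    rw [h2]; linarith
  have hphi : phi (b0 - c0) = phi (b1 + b0 - c0) := by
    have h2 : b0 - c0 = -(b1 + b0 - c0) := by rw [hc0]; ring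
    rw [h2, phi_neg]
  set A := Phi (b1 + b0 - c0) with hA
  set P := phi (b1 + b0 - c0) with hP
  have hz : HasDerivAt (fun c => Phi (b0 - c)) (phi (b0 - c0) * (0 - 1)) c0 :=
    (hasDerivAt_Phi (b0 - c0)).comp c0 ((hasDerivAt_const c0 b0).sub (hasDerivAt_id c0))
  have hw : HasDerivAt (fun c => Phi (b1 + b0 - c)) (P * (0 - 1)) c0 :=
    (hasDerivAt_Phi (b1 + b0 - c0)).comp c0
      ((hasDerivAt_const c0 (b1 + b0)).sub (hasDerivAt_id c0))
  rw [hphi] at hz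
  have hE : HasDerivAt (fun c => Phi (b0 - c) * (1 - 1/2) + Phi (b1 + b0 - c) * (1/2))
      (P * (0 - 1) * (1 - 1/2) + P * (0 - 1) * (1/2)) c0 :=
    (hz.mul_const _).add (hw.mul_const _)
  have hN : HasDerivAt
      (fun c => (1/2 : ℝ) * (Phi (b1 + b0 - c) -
        (Phi (b0 - c) * (1 - 1/2) + Phi (b1 + b0 - c) * (1/2))))
      ((1/2 : ℝ) * (P * (0 - 1) - (P * (0 - 1) * (1 - 1/2) + P * (0 - 1) * (1/2)))) c0 :=
    (hw.sub hE).const_mul _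
  have hD : HasDerivAt
      (fun c => (Phi (b0 - c) * (1 - 1/2) + Phi (b1 + b0 - c) * (1/2)) *
        (1 - (Phi (b0 - c) * (1 - 1/2) + Phi (b1 + b0 - c) * (1/2))))
      ((P * (0 - 1) * (1 - 1/2) + P * (0 - 1) * (1/2)) *
          (1 - (Phi (b0 - c0) * (1 - 1/2) + A * (1/2))) +
        (Phi (b0 - c0) * (1 - 1/2) + A * (1/2)) *
          (0 - (P * (0 - 1) * (1 - 1/2) + P * (0 - 1) * (1/2)))) c0 :=
    hE.mul ((hasDerivAt_const c0 1).sub hE)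
  have hE0 : Phi (b0 - c0) * (1 - 1/2) + A * (1/2) = 1/2 := by rw [key]; ring
  have hD0 : (Phi (b0 - c0) * (1 - 1/2) + A * (1/2)) *
      (1 - (Phi (b0 - c0) * (1 - 1/2) + A * (1/2))) ≠ 0 := by
    rw [hE0]; norm_num
  have hG := hN.div hD hD0
  have hfin := (hasDerivAt_const c0 (1 : ℝ)).sub hG
  have heq : (fun c => 1 - (1/2 : ℝ) * (Phi (b1 + b0 - c) -
        (Phi (b0 - c) * (1 - 1/2) + Phi (b1 + b0 - c) * (1/2))) /
        ((Phi (b0 - c) * (1 - 1/2) + Phi (b1 + b0 - c) * (1/2)) *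
          (1 - (Phi (b0 - c) * (1 - 1/2) + Phi (b1 + b0 - c) * (1/2)))))
      = fun c => 1 - gammaFn b1 (1/2) c b0 := by
    funext c; rw [gammaFn]
  simp only [Pi.sub_def, Pi.div_def] at hfin
  rw [heq] at hfin
  refine hfin.congr_deriv ?_
  rw [hE0]
  ring
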